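/- (Theorem 1, case b = 1.) Let (Ω, P) be a probability space, n a positive even integer, y : Fin n → Ω → ℝ independent random variables each with Gaussian law of mean μ and variance σ² (σ > 0), p : Fin n → ℝ a balanced ±1 key, and β > 0. Let the hidden bit be b = 1, define w t = y t + β·p t and the extracted bit b̃(ω) = (1/(β·n)) · ∑_t (w t ω) · p t. Then the bit extraction error probability satisfies P(b̃ < 0) = (1/2)·erfc(β·√n/(σ·√2)), where erfc x = (2/√π) · ∫_x^∞ exp(−t²) dt. -/

import Mathlib

open MeasureTheory ProbabilityTheory Finset

section Aux
open Real
open scoped NNReal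

lemma gaussianPDFReal_conv (m1 m2 : ℝ) (v1 v2 : ℝ≥0) (h1 : v1 ≠ 0) (h2 : v2 ≠ 0) (z : ℝ) :
    ∫ x : ℝ, gaussianPDFReal m1 v1 x * gaussianPDFReal m2 v2 (z - x)
      = gaussianPDFReal (m1 + m2) (v1 + v2) z := by
  have hapos : (0:ℝ) < v1 := by exact_mod_cast pos_iff_ne_zero.mpr h1
  have hbpos : (0:ℝ) < v2 := by exact_mod_cast pos_iff_ne_zero.mpr h2
  set a : ℝ := (v1 : ℝ)
  set b : ℝ := (v2 : ℝ)
  set k : ℝ := (a + b) / (2 * a * b) with hk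
  have hkpos : 0 < k := by positivity
  set x₀ : ℝ := (m1 * b + (z - m2) * a) / (a + b) with hx0
  set C : ℝ := (√(2 * π * a))⁻¹ * (√(2 * π * b))⁻¹
      * rexp (- (z - m1 - m2)^2 / (2 * (a + b))) with hC
  have habpos : 0 < a + b := by positivity
  have hpt : ∀ x : ℝ, gaussianPDFReal m1 v1 x * gaussianPDFReal m2 v2 (z - x)
      = C * rexp (- k * (x - x₀)^2) := by
    intro x
    simp only [gaussianPDFReal, hC]
    rw [mul_mul_mul_comm, ← Real.exp_add]
    conv_rhs => rw [mul_assoc, ← Real.exp_add]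
    congr 1
    rw [hk, hx0]
    congr 1
    field_simp
    ring
  simp only [hpt]
  rw [integral_const_mul]
  have hshift : ∫ x : ℝ, rexp (-k * (x - x₀)^2) = ∫ x : ℝ, rexp (-k * x^2) :=
    MeasureTheory.integral_sub_right_eq_self (fun x => rexp (-k * x^2)) x₀
  rw [hshift, integral_gaussian]
  have hs : (√(2*π*a))⁻¹ * (√(2*π*b))⁻¹ * √(π/k) = (√(2*π*(a+b)))⁻¹ := by
    rw [← Real.sqrt_inv, ← Real.sqrt_inv, ← Real.sqrt_inv,
      ← Real.sqrt_mul (by positivity), ← Real.sqrt_mul (by positivity)]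
    congr 1
    rw [hk]
    field_simp
  rw [hC, gaussianPDFReal]
  push_cast
  rw [mul_right_comm, hs]
  congr 2
  ring

lemma integrable_gauss_mul (m1 m2 : ℝ) (v1 v2 : ℝ≥0) (z : ℝ) :
    Integrable (fun x : ℝ => gaussianPDFReal m1 v1 x * gaussianPDFReal m2 v2 (z - x)) := by
  have H := (integrable_gaussianPDFReal m1 v1).bdd_mul
    (f := fun x => gaussianPDFReal m2 v2 (z - x)) (c := (√(2 * π * v2))⁻¹) ?_ ?_
  · simpa [mul_comm] using H
  · exact ((measurable_gaussianPDFReal m2 v2).comp (measurable_const.sub measurable_id)).aestronglyMeasurable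
  · refine ae_of_all _ (fun x => ?_)
    rw [Real.norm_eq_abs, abs_of_nonneg (gaussianPDFReal_nonneg _ _ _)]
    rw [gaussianPDFReal]
    have h1 : rexp (-(z - x - m2) ^ 2 / (2 * v2)) ≤ 1 := by
      apply Real.exp_le_one_iff.mpr
      exact div_nonpos_of_nonpos_of_nonneg (neg_nonpos.mpr (sq_nonneg _)) (by positivity)
    calc (√(2 * π * v2))⁻¹ * rexp (-(z - x - m2) ^ 2 / (2 * v2))
        ≤ (√(2 * π * v2))⁻¹ * 1 := by gcongr
      _ = (√(2 * π * v2))⁻¹ := mul_one _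

lemma gaussianReal_conv (m1 m2 : ℝ) (v1 v2 : ℝ≥0) :
    Measure.conv (gaussianReal m1 v1) (gaussianReal m2 v2) = gaussianReal (m1 + m2) (v1 + v2) := by
  rcases eq_or_ne v1 0 with h1 | h1
  · subst h1
    rw [gaussianReal_zero_var, Measure.conv, Measure.dirac_prod,
      Measure.map_map measurable_add measurable_prodMk_left]
    have : ((fun p : ℝ × ℝ => p.1 + p.2) ∘ Prod.mk m1) = (m1 + ·) := rfl
    rw [this, gaussianReal_map_const_add, add_comm m2 m1, zero_add]
  rcases eq_or_ne v2 0 with h2 | h2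
  · subst h2
    rw [gaussianReal_zero_var, Measure.conv, Measure.prod_dirac,
      Measure.map_map measurable_add (measurable_prodMk_right (β := ℝ))]
    have : ((fun p : ℝ × ℝ => p.1 + p.2) ∘ (fun x => (x, m2))) = (· + m2) := rfl
    rw [this, gaussianReal_map_add_const, add_zero]
  have h12 : v1 + v2 ≠ 0 := by simp [h1, h2]
  ext s hs
  rw [Measure.conv, Measure.map_apply measurable_add hs,
    Measure.prod_apply (measurable_add hs)]
  have hfib : ∀ x : ℝ, (Prod.mk x ⁻¹' ((fun p : ℝ × ℝ => p.1 + p.2) ⁻¹' s))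
      = (x + ·) ⁻¹' s := fun x => rfl
  simp_rw [hfib]
  have hmapx : ∀ x : ℝ, gaussianReal m2 v2 ((x + ·) ⁻¹' s)
      = ∫⁻ z in s, ENNReal.ofReal (gaussianPDFReal (m2 + x) v2 z) := by
    intro x
    rw [← Measure.map_apply (measurable_const_add x) hs, gaussianReal_map_const_add,
      gaussianReal_apply _ h2]
    rfl
  simp_rw [hmapx]
  have hcj : Measurable fun q : ℝ × ℝ => ENNReal.ofReal (gaussianPDFReal (m2 + q.1) v2 q.2) := by
    apply Measurable.ennreal_ofReal
    have : Continuous fun q : ℝ × ℝ => gaussianPDFReal (m2 + q.1) v2 q.2 := by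
      unfold gaussianPDFReal
      fun_prop
    exact this.measurable
  rw [gaussianReal_of_var_ne_zero _ h1,
    lintegral_withDensity_eq_lintegral_mul _ (measurable_gaussianPDF _ _)
      (Measurable.lintegral_prod_right (f := fun x z => ENNReal.ofReal (gaussianPDFReal (m2 + x) v2 z)) hcj)]
  simp only [Pi.mul_apply]
  have hpull : ∀ x : ℝ, gaussianPDF m1 v1 x
        * ∫⁻ z in s, ENNReal.ofReal (gaussianPDFReal (m2 + x) v2 z)
      = ∫⁻ z in s, gaussianPDF m1 v1 x * ENNReal.ofReal (gaussianPDFReal (m2 + x) v2 z) := by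
    intro x
    rw [← lintegral_const_mul' _ _ (by simp [gaussianPDF])]
  simp_rw [hpull]
  rw [lintegral_lintegral_swap]
  swap
  · exact ((measurable_gaussianPDF m1 v1).comp measurable_fst).mul hcj |>.aemeasurable
  have hinner : ∀ z : ℝ, (∫⁻ x, gaussianPDF m1 v1 x
        * ENNReal.ofReal (gaussianPDFReal (m2 + x) v2 z))
      = ENNReal.ofReal (gaussianPDFReal (m1 + m2) (v1 + v2) z) := by
    intro z
    have hpt : ∀ x : ℝ, gaussianPDF m1 v1 x * ENNReal.ofReal (gaussianPDFReal (m2 + x) v2 z)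
        = ENNReal.ofReal (gaussianPDFReal m1 v1 x * gaussianPDFReal m2 v2 (z - x)) := by
      intro x
      rw [gaussianPDF_def, ← ENNReal.ofReal_mul (gaussianPDFReal_nonneg _ _ _),
        gaussianPDFReal_sub]
    simp_rw [hpt]
    rw [← ofReal_integral_eq_lintegral_ofReal (integrable_gauss_mul m1 m2 v1 v2 z)
      (ae_of_all _ fun x => mul_nonneg (gaussianPDFReal_nonneg _ _ _) (gaussianPDFReal_nonneg _ _ _)),
      gaussianPDFReal_conv m1 m2 v1 v2 h1 h2 z]
  simp_rw [hinner]
  rw [gaussianReal_apply _ h12 s]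
  rfl

lemma ProbabilityTheory.IndepFun.map_add_conv {Ω : Type*} [MeasurableSpace Ω] {P : Measure Ω}
    [IsFiniteMeasure P] {X Y : Ω → ℝ} (h : IndepFun X Y P)
    (hX : Measurable X) (hY : Measurable Y) :
    P.map (fun ω => X ω + Y ω) = Measure.conv (P.map X) (P.map Y) := by
  have hprod := (indepFun_iff_map_prod_eq_prod_map_map hX.aemeasurable hY.aemeasurable).mp h
  rw [Measure.conv, ← hprod, Measure.map_map measurable_add (hX.prodMk hY)]
  rfl

lemma map_sum_gaussian {Ω : Type*} [MeasurableSpace Ω] (P : Measure Ω)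
    [IsProbabilityMeasure P] {n : ℕ} (X : Fin n → Ω → ℝ) (hXm : ∀ i, Measurable (X i))
    (hXi : iIndepFun X P) (m : Fin n → ℝ) (v : ℝ≥0)
    (hX : ∀ i, P.map (X i) = gaussianReal (m i) v) (s : Finset (Fin n)) :
    P.map (fun ω => ∑ i ∈ s, X i ω) = gaussianReal (∑ i ∈ s, m i) (s.card • v) := by
  classical
  induction s using Finset.induction with
  | empty =>
    simp only [Finset.sum_empty, Finset.card_empty, zero_smul]
    rw [gaussianReal_zero_var]
    simp [Measure.map_const]
  | @insert a s ha ih =>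
    have hind : IndepFun (X a) (fun ω => ∑ i ∈ s, X i ω) P := by
      have := (hXi.indepFun_finset_sum_of_notMem hXm ha).symm
      have he : (∑ i ∈ s, X i) = fun ω => ∑ i ∈ s, X i ω := by
        ext ω; simp [Finset.sum_apply]
      rwa [he] at this
    have hsum : (fun ω => ∑ i ∈ insert a s, X i ω)
        = fun ω => X a ω + ∑ i ∈ s, X i ω := by
      ext ω; rw [Finset.sum_insert ha]
    rw [hsum, hind.map_add_conv (hXm a) (by exact Finset.measurable_sum s fun i _ => hXm i),
      hX a, ih, gaussianReal_conv, Finset.sum_insert ha, Finset.card_insert_of_notMem ha,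
      succ_nsmul']

end Aux

/-- The complementary error function `erfc x = (2/√π) ∫_x^∞ exp(-t²) dt`. -/
noncomputable def erfc (x : ℝ) : ℝ :=
  (2 / Real.sqrt Real.pi) * ∫ t in Set.Ioi x, Real.exp (-t ^ 2)

section Tail
open Real
open scoped NNReal

lemma gaussian_tail (V : ℝ≥0) (hV : V ≠ 0) (c : ℝ) :
    gaussianReal 0 V (Set.Iio (-c))
      = ENNReal.ofReal ((1 / 2) * erfc (c / Real.sqrt (2 * V))) := by
  have hVpos : (0:ℝ) < V := by exact_mod_cast pos_iff_ne_zero.mpr hV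
  have h2V : (0:ℝ) < 2 * V := by positivity
  rw [gaussianReal_apply_eq_integral _ hV]
  congr 1
  have hIic : ∫ x in Set.Iio (-c), gaussianPDFReal 0 V x
      = ∫ x in Set.Iic (-c), gaussianPDFReal 0 V x :=
    setIntegral_congr_set Iio_ae_eq_Iic
  set g : ℝ → ℝ := fun t => (√(2 * π * V))⁻¹ * rexp (-t^2) with hg
  have hcomp : ∀ x : ℝ, gaussianPDFReal 0 V (-x) = g ((√(2 * V))⁻¹ * x) := by
    intro x
    simp only [gaussianPDFReal, hg]
    congr 1
    rw [mul_pow, ← Real.sqrt_inv, Real.sq_sqrt (by positivity)]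
    field_simp
    ring_nf
  have hneg : ∫ x in Set.Ioi c, gaussianPDFReal 0 V (-x)
      = ∫ x in Set.Iic (-c), gaussianPDFReal 0 V x :=
    integral_comp_neg_Ioi c _
  rw [hIic, ← hneg]
  simp_rw [hcomp]
  rw [MeasureTheory.integral_comp_mul_left_Ioi g c (by positivity)]
  have harg : (√(2 * V))⁻¹ * c = c / √(2 * V) := by ring
  rw [harg, hg]
  rw [integral_const_mul, smul_eq_mul, erfc]
  have hfac : (√(2 * V))⁻¹⁻¹ * ((√(2 * π * V))⁻¹) = (√π)⁻¹ := by
    rw [inv_inv]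
    rw [show 2 * π * (V:ℝ) = π * (2 * V) by ring, Real.sqrt_mul pi_pos.le, mul_inv]
    field_simp
  rw [← mul_assoc, hfac]
  rw [one_div, div_eq_mul_inv (2:ℝ), mul_comm (2:ℝ)]
  ring
end Tail

open scoped NNReal

/-- Theorem 1 of the paper, case `b = 1`. With hidden bit
`b = 1`, the bit extraction error probability of spread spectrum watermarking
is `P(b̃ < 0) = (1/2) erfc (β √n / (σ √2))`. -/
theorem bit_extraction_error_pos_bit
    {Ω : Type*} [MeasurableSpace Ω] (P : Measure Ω) [IsProbabilityMeasure P]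
    (n : ℕ) (hn : 0 < n) (hneven : Even n)
    (y : Fin n → Ω → ℝ) (hmeas : ∀ t, Measurable (y t))
    (hindep : iIndepFun y P)
    (μ σ : ℝ) (hσ : 0 < σ)
    (hlaw : ∀ t, Measure.map (y t) P = gaussianReal μ ⟨σ ^ 2, sq_nonneg σ⟩)
    (p : Fin n → ℝ) (hp : ∀ t, p t = 1 ∨ p t = -1)
    (hbal : (univ.filter fun t => p t = 1).card
          = (univ.filter fun t => p t = -1).card)
    (β : ℝ) (hβ : 0 < β)
    (w : Fin n → Ω → ℝ) (hw : ∀ t ω, w t ω = y t ω + β * p t)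
    (btilde : Ω → ℝ) (hb : ∀ ω, btilde ω = (1 / (β * n)) * ∑ t, w t ω * p t) :
    P {ω | btilde ω < 0}
      = ENNReal.ofReal
          ((1 / 2) * erfc (β * Real.sqrt n / (σ * Real.sqrt 2))) := by
  classical
  set v : ℝ≥0 := ⟨σ ^ 2, sq_nonneg σ⟩ with hv
  set X : Fin n → Ω → ℝ := fun t ω => p t * y t ω with hX
  have hXm : ∀ t, Measurable (X t) := fun t => (hmeas t).const_mul _
  have hXi : iIndepFun X P :=
    hindep.comp (fun t x => p t * x) (fun t => measurable_const_mul _)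
  have hp2 : ∀ t, (p t)^2 = 1 := by
    intro t; rcases hp t with h | h <;> rw [h] <;> norm_num
  have hXlaw : ∀ t, P.map (X t) = gaussianReal (p t * μ) v := by
    intro t
    have : P.map (X t) = (P.map (y t)).map (p t * ·) := by
      rw [Measure.map_map (measurable_const_mul _) (hmeas t)]
      rfl
    have hone : (NNReal.mk ((p t)^2) (sq_nonneg _) : ℝ≥0) = 1 := by
      ext
      simpa using hp2 t
    rw [this, hlaw t, gaussianReal_map_const_mul, hone, one_mul]
  -- sum of p t is zero
  have hpsum : ∑ t, p t = 0 := by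
    rw [← Finset.sum_filter_add_sum_filter_not univ (fun t => p t = 1)]
    have h1 : ∑ t ∈ univ.filter (fun t => p t = 1), p t
        = ((univ.filter fun t => p t = 1).card : ℝ) := by
      rw [Finset.sum_congr rfl (fun t ht => (Finset.mem_filter.mp ht).2)]
      simp
    have hfilt : univ.filter (fun t => ¬ p t = 1) = univ.filter (fun t => p t = -1) := by
      apply Finset.filter_congr
      intro t _
      rcases hp t with h | h <;> simp [h] <;> norm_num
    have h2 : ∑ t ∈ univ.filter (fun t => ¬ p t = 1), p t
        = -((univ.filter fun t => p t = -1).card : ℝ) := by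
      rw [hfilt, Finset.sum_congr rfl (fun t ht => (Finset.mem_filter.mp ht).2)]
      simp
    rw [h1, h2, hbal]
    ring
  -- law of the sum
  have hSlaw : P.map (fun ω => ∑ t, X t ω) = gaussianReal 0 (n • v) := by
    have := map_sum_gaussian P X hXm hXi (fun t => p t * μ) v hXlaw univ
    rw [← Finset.sum_mul, hpsum, zero_mul] at this
    simpa using this
  have hSm : Measurable (fun ω => ∑ t, X t ω) :=
    Finset.measurable_sum univ fun i _ => hXm i
  -- rewrite the event
  have hset : {ω | btilde ω < 0} = (fun ω => ∑ t, X t ω) ⁻¹' (Set.Iio (-(β * n))) := by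
    ext ω
    have hbn : (0:ℝ) < β * n := by positivity
    have hexp : btilde ω = (1 / (β * n)) * ((∑ t, X t ω) + β * n) := by
      rw [hb ω]
      congr 1
      have hterm : ∀ t, w t ω * p t = X t ω + β := by
        intro t
        rw [hw t ω]
        show (y t ω + β * p t) * p t = p t * y t ω + β
        rcases hp t with h | h <;> rw [h] <;> ring
      rw [Finset.sum_congr rfl (fun t _ => hterm t), Finset.sum_add_distrib,
        Finset.sum_const, Finset.card_univ, Fintype.card_fin, nsmul_eq_mul, mul_comm]
    simp only [Set.mem_setOf_eq, Set.mem_preimage, Set.mem_Iio]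
    have hpos : 0 < 1 / (β * (n:ℝ)) := by positivity
    rw [hexp, show (0:ℝ) = (1 / (β * (n:ℝ))) * 0 by ring, mul_lt_mul_iff_right₀ hpos]
    constructor <;> intro h <;> linarith
  rw [hset, ← Measure.map_apply hSm measurableSet_Iio, hSlaw,
    gaussian_tail _ (by
      simp only [ne_eq, smul_eq_zero]
      push_neg
      constructor
      · exact hn.ne'
      · rw [hv]
        intro hcon
        have : σ^2 = 0 := congrArg Subtype.val hcon
        nlinarith)]
  congr 3
  -- argument identity
  have hnn : (0:ℝ) ≤ (n:ℝ) := Nat.cast_nonneg n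
  have hnv : ((n • v : ℝ≥0) : ℝ) = n * σ^2 := by
    rw [NNReal.coe_nsmul, nsmul_eq_mul, hv]
    rfl
  rw [hnv]
  have hsqrt : Real.sqrt (2 * ((n:ℝ) * σ^2)) = σ * Real.sqrt 2 * Real.sqrt n := by
    rw [show 2 * ((n:ℝ) * σ^2) = σ^2 * (2 * n) by ring,
      Real.sqrt_mul (sq_nonneg σ), Real.sqrt_sq hσ.le,
      Real.sqrt_mul (by norm_num : (0:ℝ) ≤ 2), mul_assoc]
  rw [hsqrt]
  have hsn : Real.sqrt n ≠ 0 := by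
    refine Real.sqrt_ne_zero'.mpr ?_
    exact_mod_cast hn
  have hsnpos : (0:ℝ) < Real.sqrt n := Real.sqrt_pos.mpr (by exact_mod_cast hn)
  rw [div_eq_div_iff (by positivity) (by positivity)]
  linear_combination (-(β * σ * Real.sqrt 2)) * Real.sq_sqrt hnn
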